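/- Let d₁ ≠ d₂ be square-free positive integers, and for i = 1,2 let ω_i be pure quaternions with ω_i² = d_i, and a_i, b_i positive integers. Write (a_i + b_iω_i)^{m_i} = l_i + r_i ω_i. If l₁ + r₁ω₁ = l₂ + r₂ω₂ as quaternions (equal scalar parts and r₁ω₁ = r₂ω₂ as pure quaternions), then m₁ = m₂ = 0. -/

import Mathlib

/-- Coefficient recursion for powers of `a + b·ω` when `ω² = d`. -/
def famLR (a b d : ℤ) : ℕ → ℤ × ℤ
  | 0 => (1, 0)
  | n + 1 =>
    ((famLR a b d n).1 * a + (famLR a b d n).2 * b * d,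
     (famLR a b d n).1 * b + (famLR a b d n).2 * a)

lemma famLR_pos {a b d : ℤ} (ha : 0 < a) (hb : 0 < b) (hd : 0 < d) :
    ∀ m : ℕ, 0 < (famLR a b d m).1 ∧ 0 ≤ (famLR a b d m).2 ∧
      (m ≠ 0 → 0 < (famLR a b d m).2) := by
  intro m
  induction m with
  | zero => simp [famLR]
  | succ n ih =>
    obtain ⟨h1, h2, _⟩ := ih
    simp only [famLR]
    refine ⟨by positivity, by positivity, fun _ => by positivity⟩

lemma famLR_pow {c₁ c₂ : ℚ} (a b d : ℤ) (ω : QuaternionAlgebra ℚ c₁ 0 c₂)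
    (hω : ω * ω = (d : QuaternionAlgebra ℚ c₁ 0 c₂)) (m : ℕ) :
    ((a : QuaternionAlgebra ℚ c₁ 0 c₂) + (b : QuaternionAlgebra ℚ c₁ 0 c₂) * ω) ^ m
      = ((famLR a b d m).1 : QuaternionAlgebra ℚ c₁ 0 c₂)
        + ((famLR a b d m).2 : QuaternionAlgebra ℚ c₁ 0 c₂) * ω := by
  induction m with
  | zero => simp [famLR]
  | succ n ih =>
    have hc : ∀ k : ℤ, ω * (k : QuaternionAlgebra ℚ c₁ 0 c₂)
        = (k : QuaternionAlgebra ℚ c₁ 0 c₂) * ω := fun k => (Int.cast_commute k ω).symm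
    rw [pow_succ, ih]
    simp only [famLR]
    push_cast
    simp only [add_mul, mul_add, mul_assoc]
    rw [← mul_assoc ω ((b : QuaternionAlgebra ℚ c₁ 0 c₂)) ω, hc b, mul_assoc, hω, hc a]
    abel

lemma sf_eq_of_sq_mul_eq {x y d₁ d₂ : ℕ} (hx : x ≠ 0) (hy : y ≠ 0)
    (h1 : Squarefree d₁) (h2 : Squarefree d₂) (h : x ^ 2 * d₁ = y ^ 2 * d₂) :
    d₁ = d₂ := by
  rw [Nat.Squarefree.ext_iff h1 h2]
  intro p hp
  have hfac := congrArg (fun n => n.factorization p) h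
  simp only [Nat.factorization_mul (pow_ne_zero 2 hx) h1.ne_zero,
    Nat.factorization_mul (pow_ne_zero 2 hy) h2.ne_zero,
    Nat.factorization_pow, Finsupp.add_apply, Finsupp.smul_apply, smul_eq_mul] at hfac
  have e1 := h1.natFactorization_le_one p
  have e2 := h2.natFactorization_le_one p
  rw [hp.dvd_iff_one_le_factorization h1.ne_zero,
    hp.dvd_iff_one_le_factorization h2.ne_zero]
  omega

lemma int_sf_eq {r₁ r₂ d₁ d₂ : ℤ} (hd₁ : 0 < d₁) (hd₂ : 0 < d₂)
    (h1 : Squarefree d₁) (h2 : Squarefree d₂) (hr₁ : r₁ ≠ 0)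
    (h : r₁ * r₁ * d₁ = r₂ * r₂ * d₂) : d₁ = d₂ := by
  have hr₂ : r₂ ≠ 0 := by
    rintro rfl
    simp only [mul_zero, zero_mul] at h
    exact hr₁ (by nlinarith [mul_self_nonneg r₁])
  have hn : r₁.natAbs ^ 2 * d₁.natAbs = r₂.natAbs ^ 2 * d₂.natAbs := by
    have := congrArg Int.natAbs h
    simpa [Int.natAbs_mul, sq, mul_assoc] using this
  have := sf_eq_of_sq_mul_eq (Int.natAbs_ne_zero.2 hr₁) (Int.natAbs_ne_zero.2 hr₂)
    (Int.squarefree_natAbs.2 h1) (Int.squarefree_natAbs.2 h2) hn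
  omega

/-- Uniqueness of the `ω`-coefficient in `l + r ω`. -/
lemma coeff_eq {c₁ c₂ : ℚ} {ω : QuaternionAlgebra ℚ c₁ 0 c₂} {d l r l' r' : ℤ}
    (hd : d ≠ 0) (hp : ω.re = 0)
    (hω : ω * ω = (d : QuaternionAlgebra ℚ c₁ 0 c₂))
    (h : (l : QuaternionAlgebra ℚ c₁ 0 c₂) + (r : QuaternionAlgebra ℚ c₁ 0 c₂) * ω
       = (l' : QuaternionAlgebra ℚ c₁ 0 c₂) + (r' : QuaternionAlgebra ℚ c₁ 0 c₂) * ω) :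
    l = l' ∧ r = r' := by
  have hl : l = l' := by
    have := congrArg QuaternionAlgebra.re h
    simp only [QuaternionAlgebra.re_add, QuaternionAlgebra.re_mul] at this
    simp [hp] at this
    exact_mod_cast this
  refine ⟨hl, ?_⟩
  have h2 : (r : QuaternionAlgebra ℚ c₁ 0 c₂) * ω
      = (r' : QuaternionAlgebra ℚ c₁ 0 c₂) * ω := by
    have := h
    rw [hl] at this
    exact add_left_cancel this
  have h3 := congrArg (· * ω) h2
  simp only [mul_assoc, hω] at h3
  have h4 : ((r * d : ℤ) : QuaternionAlgebra ℚ c₁ 0 c₂)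
      = ((r' * d : ℤ) : QuaternionAlgebra ℚ c₁ 0 c₂) := by push_cast; exact h3
  have h5 : ((r * d : ℤ) : ℚ) = ((r' * d : ℤ) : ℚ) := by
    have := congrArg QuaternionAlgebra.re h4
    simpa using this
  have h6 : r * d = r' * d := by exact_mod_cast h5
  exact mul_right_cancel₀ hd h6

/-- Squaring a pure multiple: `(r ω)² = r² d`. -/
lemma sq_pure {c₁ c₂ : ℚ} {ω : QuaternionAlgebra ℚ c₁ 0 c₂} {d r : ℤ}
    (hω : ω * ω = (d : QuaternionAlgebra ℚ c₁ 0 c₂)) :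
    ((r : QuaternionAlgebra ℚ c₁ 0 c₂) * ω) * ((r : QuaternionAlgebra ℚ c₁ 0 c₂) * ω)
      = ((r * r * d : ℤ) : QuaternionAlgebra ℚ c₁ 0 c₂) := by
  have hc : ω * (r : QuaternionAlgebra ℚ c₁ 0 c₂)
      = (r : QuaternionAlgebra ℚ c₁ 0 c₂) * ω := ((Int.cast_commute r ω).symm)
  push_cast
  rw [mul_assoc, ← mul_assoc ω, hc, mul_assoc, hω, ← mul_assoc]

theorem families_no_overlap
    (c₁ c₂ : ℚ) (d₁ d₂ : ℤ) (hd₁ : 0 < d₁) (hd₂ : 0 < d₂)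
    (hsf₁ : Squarefree d₁) (hsf₂ : Squarefree d₂) (hne : d₁ ≠ d₂)
    (ω₁ ω₂ : QuaternionAlgebra ℚ c₁ 0 c₂)
    (hp₁ : ω₁.re = 0) (hp₂ : ω₂.re = 0)
    (hω₁ : ω₁ * ω₁ = (d₁ : QuaternionAlgebra ℚ c₁ 0 c₂))
    (hω₂ : ω₂ * ω₂ = (d₂ : QuaternionAlgebra ℚ c₁ 0 c₂))
    (a₁ b₁ a₂ b₂ : ℤ) (ha₁ : 0 < a₁) (hb₁ : 0 < b₁) (ha₂ : 0 < a₂) (hb₂ : 0 < b₂)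
    (m₁ m₂ : ℕ) (l₁ r₁ l₂ r₂ : ℤ)
    (h₁ : ((a₁ : QuaternionAlgebra ℚ c₁ 0 c₂) + (b₁ : QuaternionAlgebra ℚ c₁ 0 c₂) * ω₁) ^ m₁
        = (l₁ : QuaternionAlgebra ℚ c₁ 0 c₂) + (r₁ : QuaternionAlgebra ℚ c₁ 0 c₂) * ω₁)
    (h₂ : ((a₂ : QuaternionAlgebra ℚ c₁ 0 c₂) + (b₂ : QuaternionAlgebra ℚ c₁ 0 c₂) * ω₂) ^ m₂
        = (l₂ : QuaternionAlgebra ℚ c₁ 0 c₂) + (r₂ : QuaternionAlgebra ℚ c₁ 0 c₂) * ω₂)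
    (heq : (l₁ : QuaternionAlgebra ℚ c₁ 0 c₂) + (r₁ : QuaternionAlgebra ℚ c₁ 0 c₂) * ω₁
        = (l₂ : QuaternionAlgebra ℚ c₁ 0 c₂) + (r₂ : QuaternionAlgebra ℚ c₁ 0 c₂) * ω₂) :
    m₁ = 0 ∧ m₂ = 0 := by
  -- identify the coefficients with the recursion
  have hR₁ : r₁ = (famLR a₁ b₁ d₁ m₁).2 :=
    (coeff_eq hd₁.ne' hp₁ hω₁ (h₁.symm.trans (famLR_pow a₁ b₁ d₁ ω₁ hω₁ m₁))).2
  have hR₂ : r₂ = (famLR a₂ b₂ d₂ m₂).2 :=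
    (coeff_eq hd₂.ne' hp₂ hω₂ (h₂.symm.trans (famLR_pow a₂ b₂ d₂ ω₂ hω₂ m₂))).2
  -- equal scalar parts, so equal pure parts
  have hl : l₁ = l₂ := by
    have := congrArg QuaternionAlgebra.re heq
    simp only [QuaternionAlgebra.re_add, QuaternionAlgebra.re_mul] at this
    simp [hp₁, hp₂] at this
    exact_mod_cast this
  have hpure : (r₁ : QuaternionAlgebra ℚ c₁ 0 c₂) * ω₁
      = (r₂ : QuaternionAlgebra ℚ c₁ 0 c₂) * ω₂ := by
    have := heq
    rw [hl] at this
    exact add_left_cancel this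
  -- square the pure parts
  have hsq : r₁ * r₁ * d₁ = r₂ * r₂ * d₂ := by
    have : ((r₁ * r₁ * d₁ : ℤ) : QuaternionAlgebra ℚ c₁ 0 c₂)
        = ((r₂ * r₂ * d₂ : ℤ) : QuaternionAlgebra ℚ c₁ 0 c₂) := by
      rw [← sq_pure hω₁, ← sq_pure hω₂, hpure]
    have h5 := congrArg QuaternionAlgebra.re this
    simp only [QuaternionAlgebra.re_intCast] at h5
    exact_mod_cast h5
  -- both r's vanish
  have hr₁0 : r₁ = 0 := by
    by_contra hr
    exact hne (int_sf_eq hd₁ hd₂ hsf₁ hsf₂ hr hsq)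
  have hr₂0 : r₂ = 0 := by
    rw [hr₁0] at hsq
    simp only [zero_mul, mul_zero] at hsq
    rcases mul_eq_zero.1 hsq.symm with h | h
    · exact mul_self_eq_zero.1 h
    · omega
  constructor
  · by_contra hm
    have := (famLR_pos ha₁ hb₁ hd₁ m₁).2.2 hm
    omega
  · by_contra hm
    have := (famLR_pos ha₂ hb₂ hd₂ m₂).2.2 hm
    omega
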